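/- The area (two-dimensional Lebesgue measure) of the amoeba U = {(x,y) ∈ ℝ² : 1 < e^{-x} + e^{-y}, e^{-x} < 1 + e^{-y}, e^{-y} < 1 + e^{-x}} equals π²/2. -/

import Mathlib

open Real MeasureTheory Set


lemma hasSum_odd_sq : HasSum (fun k : ℕ => (1:ℝ) / (2*(k:ℝ)+1)^2) (π^2/8) := by
  have h := hasSum_zeta_two
  set f : ℕ → ℝ := fun n => 1/(n:ℝ)^2 with hf
  have heven : HasSum (fun k : ℕ => f (2*k)) (π^2/24) := by
    have h4 := h.div_const 4
    have he : (fun k : ℕ => f (2*k)) = fun k : ℕ => f k / 4 := by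
      funext k
      simp only [hf]
      push_cast
      rw [div_div]
      congr 1
      ring
    rw [he, show π^2/24 = π^2/6/4 by ring]
    exact h4
  have hinj : Function.Injective (fun k : ℕ => 2*k+1) := fun a b hab => by
    simp only at hab; omega
  have hsum : Summable (fun k : ℕ => f (2*k+1)) := h.summable.comp_injective hinj
  have hodd := hsum.hasSum
  have huniq := (heven.even_add_odd hodd).unique h
  have hval : (∑' k : ℕ, f (2*k+1)) = π^2/8 := by linarith
  rw [hval] at hodd
  have hco : (fun k : ℕ => (1:ℝ) / (2*(k:ℝ)+1)^2) = fun k : ℕ => f (2*k+1) := by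
    funext k
    simp only [hf]
    push_cast
    ring
  rw [hco]
  exact hodd

lemma hasSum_target : HasSum (fun k : ℕ => (4:ℝ) / (2*(k:ℝ)+1)^2) (π^2/2) := by
  have h := hasSum_odd_sq.mul_left 4
  have he : (fun k : ℕ => (4:ℝ) / (2*(k:ℝ)+1)^2) = fun k : ℕ => 4 * ((1:ℝ) / (2*(k:ℝ)+1)^2) := by
    funext k; ring
  rw [he, show (π:ℝ)^2/2 = 4 * (π^2/8) by ring]
  exact h

lemma integrable_exp_neg_mul_abs {c : ℝ} (hc : 0 < c) :
    Integrable (fun x : ℝ => Real.exp (-(c * |x|))) := by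
  have hIoi : IntegrableOn (fun x : ℝ => Real.exp (-(c * |x|))) (Ioi 0) := by
    refine (exp_neg_integrableOn_Ioi 0 hc).congr_fun (fun x hx => ?_) measurableSet_Ioi
    rw [abs_of_pos hx]; simp only [neg_mul]
  have hIic : IntegrableOn (fun x : ℝ => Real.exp (-(c * |x|))) (Iic 0) := by
    rw [← Measure.map_neg_eq_self (volume : Measure ℝ)]
    have m : MeasurableEmbedding fun x : ℝ => -x := (Homeomorph.neg ℝ).measurableEmbedding
    rw [m.integrableOn_map_iff]
    simp_rw [Function.comp_def, abs_neg, neg_preimage, neg_Iic, neg_zero]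
    exact (integrableOn_Ici_iff_integrableOn_Ioi (f := fun x : ℝ => Real.exp (-(c * |x|))) (b := 0) (by simp)).mpr hIoi
  rw [← integrableOn_univ, ← Iic_union_Ioi (a := (0:ℝ))]
  exact hIic.union hIoi

lemma hasSum_slice {x : ℝ} (hx : x ≠ 0) :
    HasSum (fun k : ℕ => (2:ℝ) * (1/(2*(k:ℝ)+1)) * Real.exp (-((2*(k:ℝ)+1) * |x|)))
      (Real.log (1 + Real.exp (-x)) - Real.log |1 - Real.exp (-x)|) := by
  set u := Real.exp (-|x|) with hu
  have hupos : 0 < u := Real.exp_pos _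
  have hu1 : u < 1 := by
    rw [hu, Real.exp_lt_one_iff]
    simpa using abs_pos.mpr hx
  have habs : |u| < 1 := by rw [abs_of_pos hupos]; exact hu1
  have H := Real.hasSum_log_sub_log_of_abs_lt_one habs
  have hterm : (fun k : ℕ => (2:ℝ) * (1/(2*(k:ℝ)+1)) * u ^ (2*k+1)) =
      fun k : ℕ => (2:ℝ) * (1/(2*(k:ℝ)+1)) * Real.exp (-((2*(k:ℝ)+1) * |x|)) := by
    funext k
    congr 1
    rw [hu, ← Real.exp_nat_mul]
    congr 1
    push_cast
    ring
  rw [hterm] at H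
  have hval : Real.log (1 + u) - Real.log (1 - u) =
      Real.log (1 + Real.exp (-x)) - Real.log |1 - Real.exp (-x)| := by
    rcases lt_or_gt_of_ne hx with hneg | hpos
    · -- x < 0 : exp (-x) = u⁻¹ > 1
      have hax : |x| = -x := abs_of_neg hneg
      have hinv : Real.exp (-x) = u⁻¹ := by
        rw [hu, hax, ← Real.exp_neg, neg_neg]
      have h1 : (1:ℝ) < u⁻¹ := (one_lt_inv₀ hupos).mpr hu1
      have habs2 : |1 - u⁻¹| = u⁻¹ - 1 := by
        rw [abs_of_neg (by linarith)]; ring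
      have hne : u ≠ 0 := hupos.ne'
      have e1 : 1 + u⁻¹ = (1 + u) / u := by field_simp; ring
      have e2 : u⁻¹ - 1 = (1 - u) / u := by field_simp
      rw [hinv, habs2, e1, e2,
        Real.log_div (by positivity : (0:ℝ) < 1 + u).ne' hne,
        Real.log_div (by linarith : (0:ℝ) < 1 - u).ne' hne]
      ring
    · -- x > 0 : exp (-x) = u < 1
      have hax : |x| = x := abs_of_pos hpos
      have hux : Real.exp (-x) = u := by rw [hu, hax]
      rw [hux, abs_of_pos (by linarith)]
  rwa [hval] at H

lemma slice_eq {x : ℝ} (hx : x ≠ 0) :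
    {y : ℝ | 1 < Real.exp (-x) + Real.exp (-y) ∧ Real.exp (-x) < 1 + Real.exp (-y) ∧
      Real.exp (-y) < 1 + Real.exp (-x)} =
    Ioo (-Real.log (1 + Real.exp (-x))) (-Real.log |1 - Real.exp (-x)|) := by
  have ha : (0:ℝ) < Real.exp (-x) := Real.exp_pos _
  have hane : Real.exp (-x) ≠ 1 := by
    intro h
    exact hx (by simpa using h)
  have habs : (0:ℝ) < |1 - Real.exp (-x)| := by
    rw [abs_pos]
    intro h
    exact hane (sub_eq_zero.mp h).symm
  ext y
  have hb : (0:ℝ) < Real.exp (-y) := Real.exp_pos _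
  simp only [mem_setOf_eq, mem_Ioo]
  rw [neg_lt, lt_neg, Real.lt_log_iff_exp_lt (by positivity),
    Real.log_lt_iff_lt_exp habs, abs_lt]
  constructor
  · rintro ⟨h1, h2, h3⟩
    exact ⟨h3, by constructor <;> linarith⟩
  · rintro ⟨h3, h4, h5⟩
    exact ⟨by linarith, by linarith, h3⟩

theorem area_amoeba :
    volume {q : ℝ × ℝ | 1 < Real.exp (-q.1) + Real.exp (-q.2) ∧
        Real.exp (-q.1) < 1 + Real.exp (-q.2) ∧
        Real.exp (-q.2) < 1 + Real.exp (-q.1)} = ENNReal.ofReal (π ^ 2 / 2) := by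
  set S := {q : ℝ × ℝ | 1 < Real.exp (-q.1) + Real.exp (-q.2) ∧
        Real.exp (-q.1) < 1 + Real.exp (-q.2) ∧
        Real.exp (-q.2) < 1 + Real.exp (-q.1)} with hSdef
  have hS : MeasurableSet S := by
    rw [hSdef]
    simp only [setOf_and]
    refine ((isOpen_lt continuous_const (by fun_prop)).inter
      ((isOpen_lt (by fun_prop) (by fun_prop)).inter
        (isOpen_lt (by fun_prop) (by fun_prop)))).measurableSet
  rw [MeasureTheory.Measure.volume_eq_prod, Measure.prod_apply hS]
  have h0 : ∀ᵐ (x : ℝ) ∂(volume : Measure ℝ), x ≠ 0 := by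
    have : {x : ℝ | ¬ x ≠ 0} = {0} := by ext z; simp
    rw [ae_iff, this]
    exact measure_singleton 0
  have key : ∀ᵐ (x : ℝ) ∂(volume : Measure ℝ),
      volume (Prod.mk x ⁻¹' S) =
        ∑' k : ℕ, ENNReal.ofReal ((2:ℝ) * (1/(2*(k:ℝ)+1)) * Real.exp (-((2*(k:ℝ)+1) * |x|))) := by
    filter_upwards [h0] with x hx
    have hpre : Prod.mk x ⁻¹' S =
        {y : ℝ | 1 < Real.exp (-x) + Real.exp (-y) ∧ Real.exp (-x) < 1 + Real.exp (-y) ∧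
          Real.exp (-y) < 1 + Real.exp (-x)} := rfl
    rw [hpre, slice_eq hx, Real.volume_Ioo]
    have hs := hasSum_slice hx
    have hnn : ∀ k : ℕ, 0 ≤ (2:ℝ) * (1/(2*(k:ℝ)+1)) * Real.exp (-((2*(k:ℝ)+1) * |x|)) := by
      intro k; positivity
    rw [show -Real.log |1 - Real.exp (-x)| - -Real.log (1 + Real.exp (-x)) =
        Real.log (1 + Real.exp (-x)) - Real.log |1 - Real.exp (-x)| by ring,
      ← hs.tsum_eq, ENNReal.ofReal_tsum_of_nonneg hnn hs.summable]
  rw [lintegral_congr_ae key]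
  have hmeas : ∀ k : ℕ, AEMeasurable
      (fun x : ℝ => ENNReal.ofReal ((2:ℝ) * (1/(2*(k:ℝ)+1)) * Real.exp (-((2*(k:ℝ)+1) * |x|))))
      volume := by
    intro k
    exact (Continuous.measurable (by fun_prop)).ennreal_ofReal.aemeasurable
  rw [lintegral_tsum hmeas]
  have hterm : ∀ k : ℕ,
      (∫⁻ x : ℝ, ENNReal.ofReal ((2:ℝ) * (1/(2*(k:ℝ)+1)) * Real.exp (-((2*(k:ℝ)+1) * |x|))))
        = ENNReal.ofReal ((4:ℝ) / (2*(k:ℝ)+1)^2) := by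
    intro k
    set c : ℝ := 2*(k:ℝ)+1 with hc
    have hcpos : (0:ℝ) < c := by positivity
    have hint : Integrable (fun x : ℝ => (2:ℝ) * (1/c) * Real.exp (-(c * |x|))) :=
      (integrable_exp_neg_mul_abs hcpos).const_mul _
    rw [← ofReal_integral_eq_lintegral_ofReal hint
      (Filter.Eventually.of_forall fun x => by positivity)]
    congr 1
    rw [MeasureTheory.integral_const_mul]
    have h1 : (∫ x : ℝ, Real.exp (-(c * |x|))) = 2 * ∫ x in Ioi (0:ℝ), Real.exp (-(c * x)) :=
      integral_comp_abs (f := fun t => Real.exp (-(c * t)))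
    have h2 : (∫ x in Ioi (0:ℝ), Real.exp (-(c * x))) = c⁻¹ := by
      have := integral_comp_mul_left_Ioi (fun y => Real.exp (-y)) 0 hcpos
      simp only [mul_zero] at this
      rw [this, integral_exp_neg_Ioi, neg_zero, Real.exp_zero, smul_eq_mul, mul_one]
    rw [h1, h2]
    field_simp
    ring
  have hfinal : (∑' k : ℕ, ENNReal.ofReal ((4:ℝ) / (2*(k:ℝ)+1)^2)) =
      ENNReal.ofReal (π ^ 2 / 2) := by
    rw [← ENNReal.ofReal_tsum_of_nonneg (fun k => by positivity) hasSum_target.summable,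
      hasSum_target.tsum_eq]
  rw [tsum_congr hterm, hfinal]
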